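/- Every finite connected distance-hereditary graph G with at least two vertices contains a vertex y such that either y has exactly one neighbor in G (y is a pendant vertex), or there exists a vertex x ≠ y with N_G[x] = N_G[y] (a true twin of y), or there exists a vertex x ≠ y with N_G(x) = N_G(y) (a false twin of y). (This is the key step of direction (i) ⇒ (ii) of the Bandelt–Mulder characterization, Theorem 1: every distance-hereditary graph can be generated from a single vertex by repeatedly adding a pendant vertex, a false twin, or a true twin.) -/

import Mathlib

open SimpleGraph

/-- `G` is distance-hereditary: in every connected induced subgraph,
distances agree with those in `G`. -/
def DistanceHereditary {V : Type*} (G : SimpleGraph V) : Prop :=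
  ∀ S : Set V, (G.induce S).Connected →
    ∀ u v : S, (G.induce S).dist u v = G.dist u.1 v.1

/-- `G` contains `H` as an induced subgraph: there is an injection of the
vertices of `H` into those of `G` preserving adjacency and non-adjacency. -/
def ContainsInduced {α β : Type*} (H : SimpleGraph α) (G : SimpleGraph β) : Prop :=
  ∃ f : α → β, Function.Injective f ∧ ∀ a b : α, H.Adj a b ↔ G.Adj (f a) (f b)

/-- The house: vertices a,b,c,d,e = 0,1,2,3,4; edges ab,bc,cd,ad,ae,be. -/
def house : SimpleGraph (Fin 5) :=
  SimpleGraph.fromEdgeSet {s(0,1), s(1,2), s(2,3), s(0,3), s(0,4), s(1,4)}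

/-- The gem: vertices a,b,c,d,e = 0,1,2,3,4; edges ab,bc,cd,ae,be,ce,de. -/
def gem : SimpleGraph (Fin 5) :=
  SimpleGraph.fromEdgeSet {s(0,1), s(1,2), s(2,3), s(0,4), s(1,4), s(2,4), s(3,4)}

/-- The domino: vertices a,b,c,d,e,h = 0,1,2,3,4,5; edges ab,bc,cd,ad,be,eh,ch. -/
def domino : SimpleGraph (Fin 6) :=
  SimpleGraph.fromEdgeSet {s(0,1), s(1,2), s(2,3), s(0,3), s(1,4), s(4,5), s(2,5)}

/-- `G` is (house, hole, domino, gem)-free. A hole is an induced `C_n`, `n ≥ 5`. -/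
def HHDGFree {V : Type*} (G : SimpleGraph V) : Prop :=
  ¬ ContainsInduced house G ∧
  (∀ n : ℕ, 5 ≤ n → ¬ ContainsInduced (SimpleGraph.cycleGraph n) G) ∧
  ¬ ContainsInduced domino G ∧
  ¬ ContainsInduced gem G

/-- A stable (independent) set: pairwise non-adjacent vertices. -/
def IsStableSet {V : Type*} (G : SimpleGraph V) (s : Set V) : Prop :=
  s.Pairwise fun a b => ¬ G.Adj a b

/-- `T` is a cycle-transversal of `G`: every cycle of `G` contains a vertex of `T`. -/
def IsCycleTransversal {V : Type*} (G : SimpleGraph V) (T : Set V) : Prop :=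
  ∀ ⦃v : V⦄ (c : G.Walk v v), c.IsCycle → ∃ w ∈ c.support, w ∈ T

/-- A clique cycle-transversal (cct): a cycle-transversal that is a clique. -/
def IsCCT {V : Type*} (G : SimpleGraph V) (T : Set V) : Prop :=
  G.IsClique T ∧ IsCycleTransversal G T


universe u

section Generic
variable {W : Type u}

lemma lip_walk {H : SimpleGraph W} (f : W → ℕ)
    (hf : ∀ a b, H.Adj a b → f b ≤ f a + 1) :
    ∀ {a b : W} (p : H.Walk a b), f b ≤ f a + p.length := by
  intro a b p
  induction p with
  | nil => simp
  | cons h q ih =>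
    simp only [SimpleGraph.Walk.length_cons]
    have := hf _ _ h
    omega

lemma lip_dist {H : SimpleGraph W} (f : W → ℕ)
    (hf : ∀ a b, H.Adj a b → f b ≤ f a + 1) {a b : W}
    (h : H.Reachable a b) : f b ≤ f a + H.dist a b := by
  obtain ⟨p, hp⟩ := h.exists_walk_length_eq_dist
  have := lip_walk f hf p
  omega

/-- induced path on 4 vertices (a-b-c-d). -/
def IndP4 (H : SimpleGraph W) (a b c d : W) : Prop :=
  H.Adj a b ∧ H.Adj b c ∧ H.Adj c d ∧ ¬H.Adj a c ∧ ¬H.Adj a d ∧ ¬H.Adj b d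

lemma IndP4.distinct {H : SimpleGraph W} {a b c d : W} (h : IndP4 H a b c d) :
    a ≠ b ∧ a ≠ c ∧ a ≠ d ∧ b ≠ c ∧ b ≠ d ∧ c ≠ d := by
  obtain ⟨h1, h2, h3, h4, h5, h6⟩ := h
  refine ⟨h1.ne, ?_, ?_, h2.ne, ?_, h3.ne⟩
  · rintro rfl; exact h5 h3
  · rintro rfl; exact h6 h1.symm
  · rintro rfl; exact h5 h1

lemma IndP4.compl {H : SimpleGraph W} {a b c d : W} (h : IndP4 Hᶜ a b c d) :
    IndP4 H b d a c := by
  obtain ⟨hne1, hne2, hne3, hne4, hne5, hne6⟩ := h.distinct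
  obtain ⟨h1, h2, h3, h4, h5, h6⟩ := h
  rw [SimpleGraph.compl_adj] at h1 h2 h3
  refine ⟨?_, ?_, ?_, ?_, ?_, ?_⟩
  · by_contra hbd; exact h6 ⟨hne5, hbd⟩
  · by_contra had; exact h5 ⟨hne3, fun hh => had hh.symm⟩
  · by_contra hac; exact h4 ⟨hne2, hac⟩
  · exact fun hh => h1.2 hh.symm
  · exact fun hh => h2.2 hh
  · exact fun hh => h3.2 hh.symm
lemma exists_adj_of_walk {H : SimpleGraph W} :
    ∀ {a b : W}, H.Walk a b → a ≠ b → ∃ c, H.Adj a c := by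
  intro a b p
  cases p with
  | nil => intro h; exact absurd rfl h
  | cons h q => intro _; exact ⟨_, h⟩

lemma exists_switch {H : SimpleGraph W} (P : W → Prop) :
    ∀ {c d : W} (_ : H.Walk c d), P c → ¬P d →
      ∃ s t, H.Adj s t ∧ P s ∧ ¬P t ∧ H.Reachable c s := by
  intro c d p
  induction p with
  | nil => intro hc hd; exact absurd hc hd
  | @cons a e b h q ih =>
    intro hc hd
    by_cases he : P e
    · obtain ⟨s, t, h1, h2, h3, h4⟩ := ih he hd
      exact ⟨s, t, h1, h2, h3, (h.reachable).trans h4⟩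
    · exact ⟨a, e, h, hc, he, Reachable.refl _⟩

lemma reach_attach {H : SimpleGraph W} {v : W} :
    ∀ {a b : W} (_ : H.Walk a b) (_ : b = v) (ha : a ≠ v),
      ∃ x, ∃ hx : x ≠ v, H.Adj x v ∧
        (H.induce {t | t ≠ v}).Reachable ⟨a, ha⟩ ⟨x, hx⟩ := by
  intro a b p
  induction p with
  | nil => intro hb ha; exact absurd hb ha
  | @cons a e b h q ih =>
    intro hb ha
    by_cases he : e = v
    · subst hb; subst he
      exact ⟨a, ha, h, Reachable.refl _⟩
    · obtain ⟨x, hx, hadj, hreach⟩ := ih hb he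
      refine ⟨x, hx, hadj, Reachable.trans ?_ hreach⟩
      have hstep : (H.induce {t | t ≠ v}).Adj ⟨a, ha⟩ ⟨e, he⟩ := h
      exact hstep.reachable
lemma L1 {H : SimpleGraph W} (hH : H.Connected) (v : W)
    (hdisc : ∃ a b : {t : W | t ≠ v}, ¬(H.induce {t : W | t ≠ v}).Reachable a b)
    (hnu : ∃ w, w ≠ v ∧ ¬H.Adj v w) : ∃ a b c d, IndP4 H a b c d := by
  classical
  obtain ⟨⟨a, ha⟩, ⟨b, hb⟩, hab⟩ := hdisc
  obtain ⟨w, hw, hvw⟩ := hnu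
  obtain ⟨pa⟩ := hH.preconnected a v
  obtain ⟨pb⟩ := hH.preconnected b v
  obtain ⟨pw⟩ := hH.preconnected w v
  obtain ⟨x₁, hx₁, hadj₁, hr₁⟩ := reach_attach pa rfl ha
  obtain ⟨x₂, hx₂, hadj₂, hr₂⟩ := reach_attach pb rfl hb
  obtain ⟨x₃, hx₃, hadj₃, hr₃⟩ := reach_attach pw rfl hw
  have h12 : ¬(H.induce {t : W | t ≠ v}).Reachable ⟨x₁, hx₁⟩ ⟨x₂, hx₂⟩ := by
    intro r; exact hab (hr₁.trans (r.trans hr₂.symm))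
  -- choose α not reachable from x₃
  obtain ⟨α, hαv, hadjα, hα3⟩ :
      ∃ α, ∃ hαv : α ≠ v, H.Adj α v ∧
        ¬(H.induce {t : W | t ≠ v}).Reachable ⟨x₃, hx₃⟩ ⟨α, hαv⟩ := by
    by_cases h31 : (H.induce {t : W | t ≠ v}).Reachable ⟨x₃, hx₃⟩ ⟨x₁, hx₁⟩
    · refine ⟨x₂, hx₂, hadj₂, fun r => h12 (h31.symm.trans r)⟩
    · exact ⟨x₁, hx₁, hadj₁, h31⟩
  obtain ⟨q⟩ := hr₃.symm
  obtain ⟨s, t, hst, hPs, hPt, hrs⟩ :=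
    exists_switch (fun t : {t : W | t ≠ v} => H.Adj v t.1) q hadj₃.symm hvw
  refine ⟨α, v, s.1, t.1, hadjα, hPs, hst, ?_, ?_, hPt⟩
  · intro hc
    have : (H.induce {t : W | t ≠ v}).Adj ⟨α, hαv⟩ s := by
      have : (H.induce {t : W | t ≠ v}).Adj ⟨α, hαv⟩ ⟨s.1, s.2⟩ := hc
      exact this
    exact hα3 (hrs.trans this.symm.reachable)
  · intro hc
    have : (H.induce {t : W | t ≠ v}).Adj ⟨α, hαv⟩ t := by
      have : (H.induce {t : W | t ≠ v}).Adj ⟨α, hαv⟩ ⟨t.1, t.2⟩ := hc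
      exact this
    exact hα3 ((hrs.trans hst.reachable).trans this.symm.reachable)
lemma induce_compl_eq {H : SimpleGraph W} (S : Set W) :
    (Hᶜ).induce S = (H.induce S)ᶜ := by
  ext a b
  simp only [SimpleGraph.comap_adj, Function.Embedding.coe_subtype, SimpleGraph.compl_adj]
  constructor
  · rintro ⟨h1, h2⟩; exact ⟨fun hh => h1 (congrArg Subtype.val hh), h2⟩
  · rintro ⟨h1, h2⟩; exact ⟨fun hh => h1 (Subtype.ext hh), h2⟩

lemma IndP4.of_induce {H : SimpleGraph W} {S : Set W} {a b c d : ↥S}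
    (h : IndP4 (H.induce S) a b c d) : IndP4 H a.1 b.1 c.1 d.1 := by
  obtain ⟨h1, h2, h3, h4, h5, h6⟩ := h
  exact ⟨h1, h2, h3, fun hh => h4 hh, fun hh => h5 hh, fun hh => h6 hh⟩

lemma P4EX : ∀ (n : ℕ) {W : Type u} [Fintype W] (H : SimpleGraph W),
    Fintype.card W = n → 2 ≤ n → H.Connected → Hᶜ.Connected →
    ∃ a b c d, IndP4 H a b c d := by
  intro n
  induction n using Nat.strong_induction_on with | h n IH => ?_
  intro W instW H hn h2 hc hcc
  classical
  by_cases hc2 : Fintype.card W = 2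
  · -- two vertices: contradiction
    have h2' : Nat.card W = 2 := by rw [Nat.card_eq_fintype_card, hc2]
    obtain ⟨x, y, hxy, huniv⟩ := Nat.card_eq_two_iff.mp h2'
    exfalso
    obtain ⟨p⟩ := hc.preconnected x y
    obtain ⟨c, hac⟩ := exists_adj_of_walk p hxy
    have hcy : c = y := by
      have : c ∈ ({x, y} : Set W) := by rw [huniv]; trivial
      rcases this with h | h
      · exact absurd h hac.ne'
      · exact h
    obtain ⟨p'⟩ := hcc.preconnected x y
    obtain ⟨c', hac'⟩ := exists_adj_of_walk p' hxy
    have hcy' : c' = y := by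
      have : c' ∈ ({x, y} : Set W) := by rw [huniv]; trivial
      rcases this with h | h
      · exact absurd h hac'.ne'
      · exact h
    subst hcy; subst hcy'
    exact hac'.2 hac
  · have h3 : 3 ≤ Fintype.card W := by omega
    have hpos : 0 < Fintype.card W := by omega
    obtain ⟨v⟩ := Fintype.card_pos_iff.mp hpos
    set S : Set W := {t : W | t ≠ v} with hS
    have hcardS : Fintype.card ↥S = Fintype.card W - 1 := by
      have : Fintype.card ↥S = Fintype.card {t : W | t ≠ v} := rfl
      rw [this]
      simp [Set.card_ne_eq, Finset.filter_ne', Finset.card_univ]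
    -- non-universality witnesses
    have hnuH : ∃ w, w ≠ v ∧ ¬H.Adj v w := by
      obtain ⟨w0, hw0⟩ := Fintype.exists_ne_of_one_lt_card (by omega) v
      obtain ⟨p⟩ := hcc.preconnected v w0
      obtain ⟨c, hac⟩ := exists_adj_of_walk p (fun h => hw0 h.symm)
      exact ⟨c, hac.ne', hac.2⟩
    have hnuHc : ∃ w, w ≠ v ∧ ¬(Hᶜ).Adj v w := by
      obtain ⟨w0, hw0⟩ := Fintype.exists_ne_of_one_lt_card (by omega) v
      obtain ⟨p⟩ := hc.preconnected v w0
      obtain ⟨c, hac⟩ := exists_adj_of_walk p (fun h => hw0 h.symm)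
      exact ⟨c, hac.ne', fun hh => hh.2 hac⟩
    by_cases h1 : ∀ a b : ↥S, (H.induce S).Reachable a b
    · by_cases h2' : ∀ a b : ↥S, ((Hᶜ).induce S).Reachable a b
      · -- both connected: recurse
        have hne : Nonempty ↥S := by
          rw [← Fintype.card_pos_iff, hcardS]; omega
        haveI := hne
        have hconn1 : (H.induce S).Connected := SimpleGraph.Connected.mk h1
        have hconn2 : ((H.induce S))ᶜ.Connected := by
          rw [← induce_compl_eq]; exact SimpleGraph.Connected.mk h2'
        obtain ⟨a, b, c, d, hP⟩ := IH (n - 1) (by omega) (H.induce S)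
          (by rw [hcardS, hn]) (by omega) hconn1 hconn2
        exact ⟨a.1, b.1, c.1, d.1, hP.of_induce⟩
      · push_neg at h2'
        obtain ⟨a, b, hab⟩ := h2'
        obtain ⟨x, y, z, t, hP⟩ := L1 hcc v ⟨a, b, hab⟩ hnuHc
        exact ⟨y, t, x, z, hP.compl⟩
    · push_neg at h1
      obtain ⟨a, b, hab⟩ := h1
      exact L1 hc v ⟨a, b, hab⟩ hnuH
def TwinsPt (H : SimpleGraph W) (x y : W) : Prop :=
  (∀ t, H.Adj x t ↔ H.Adj y t) ∨ (∀ t, (t = x ∨ H.Adj x t) ↔ (t = y ∨ H.Adj y t))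

lemma twins_lift_closed {H : SimpleGraph W} {S : Set W}
    (hcl : ∀ a ∈ S, ∀ b, H.Adj a b → b ∈ S)
    {p q : ↥S} (hne : p ≠ q) (hTw : TwinsPt (H.induce S) p q) :
    ∃ x y : W, x ≠ y ∧ TwinsPt H x y := by
  refine ⟨p.1, q.1, fun h => hne (Subtype.ext h), ?_⟩
  rcases hTw with hTw | hTw
  · left
    intro t
    by_cases ht : t ∈ S
    · exact hTw ⟨t, ht⟩
    · constructor
      · intro h; exact absurd (hcl p.1 p.2 t h) ht
      · intro h; exact absurd (hcl q.1 q.2 t h) ht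
  · right
    intro t
    by_cases ht : t ∈ S
    · have := hTw ⟨t, ht⟩
      constructor
      · rintro (h | h)
        · rcases this.mp (Or.inl (Subtype.ext h)) with h' | h'
          · exact Or.inl (congrArg Subtype.val h')
          · exact Or.inr h'
        · rcases this.mp (Or.inr h) with h' | h'
          · exact Or.inl (congrArg Subtype.val h')
          · exact Or.inr h'
      · rintro (h | h)
        · rcases this.mpr (Or.inl (Subtype.ext h)) with h' | h'
          · exact Or.inl (congrArg Subtype.val h')
          · exact Or.inr h'
        · rcases this.mpr (Or.inr h) with h' | h'
          · exact Or.inl (congrArg Subtype.val h')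
          · exact Or.inr h'
    · constructor
      · rintro (h | h)
        · exact absurd (h ▸ p.2) ht
        · exact absurd (hcl p.1 p.2 t h) ht
      · rintro (h | h)
        · exact absurd (h ▸ q.2) ht
        · exact absurd (hcl q.1 q.2 t h) ht

lemma twins_lift_coclosed {H : SimpleGraph W} {S : Set W}
    (hco : ∀ a ∈ S, ∀ b, b ∉ S → H.Adj a b)
    {p q : ↥S} (hne : p ≠ q) (hTw : TwinsPt (H.induce S) p q) :
    ∃ x y : W, x ≠ y ∧ TwinsPt H x y := by
  refine ⟨p.1, q.1, fun h => hne (Subtype.ext h), ?_⟩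
  rcases hTw with hTw | hTw
  · left
    intro t
    by_cases ht : t ∈ S
    · exact hTw ⟨t, ht⟩
    · constructor
      · intro _; exact hco q.1 q.2 t ht
      · intro _; exact hco p.1 p.2 t ht
  · right
    intro t
    by_cases ht : t ∈ S
    · have := hTw ⟨t, ht⟩
      constructor
      · rintro (h | h)
        · rcases this.mp (Or.inl (Subtype.ext h)) with h' | h'
          · exact Or.inl (congrArg Subtype.val h')
          · exact Or.inr h'
        · rcases this.mp (Or.inr h) with h' | h'
          · exact Or.inl (congrArg Subtype.val h')
          · exact Or.inr h'
      · rintro (h | h)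
        · rcases this.mpr (Or.inl (Subtype.ext h)) with h' | h'
          · exact Or.inl (congrArg Subtype.val h')
          · exact Or.inr h'
        · rcases this.mpr (Or.inr h) with h' | h'
          · exact Or.inl (congrArg Subtype.val h')
          · exact Or.inr h'
    · constructor
      · intro _; exact Or.inr (hco q.1 q.2 t ht)
      · intro _; exact Or.inr (hco p.1 p.2 t ht)

lemma COG : ∀ (n : ℕ) {W : Type u} [Fintype W] (H : SimpleGraph W),
    Fintype.card W = n → 2 ≤ n → (∀ a b c d, ¬IndP4 H a b c d) →
    ∃ x y : W, x ≠ y ∧ TwinsPt H x y := by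
  intro n
  induction n using Nat.strong_induction_on with | h n IH => ?_
  intro W instW H hn h2 hP4
  classical
  have hP4ind : ∀ (S : Set W), ∀ a b c d, ¬IndP4 (H.induce S) a b c d :=
    fun S a b c d h => hP4 _ _ _ _ h.of_induce
  by_cases hpre : ∀ a b : W, H.Reachable a b
  · by_cases hpre' : ∀ a b : W, (Hᶜ).Reachable a b
    · exfalso
      have hne : Nonempty W := Fintype.card_pos_iff.mp (by omega)
      obtain ⟨a, b, c, d, hP⟩ := P4EX n H hn h2
        (SimpleGraph.Connected.mk hpre) (SimpleGraph.Connected.mk hpre')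
      exact hP4 a b c d hP
    · push_neg at hpre'
      obtain ⟨x, y, hxy⟩ := hpre'
      have hxyne : x ≠ y := fun h => hxy (h ▸ Reachable.refl x)
      -- universal-closure trick
      have key : ∀ z : W, (∀ t ∈ {t | (Hᶜ).Reachable z t}, t = z) →
          ∀ t, t ≠ z → H.Adj z t := by
        intro z hz t ht
        by_contra hadj
        have : (Hᶜ).Adj z t := ⟨fun h => ht h.symm, hadj⟩
        exact ht (hz t this.reachable)
      have main : ∀ z w : W, ¬(Hᶜ).Reachable z w →
          (∃ t ∈ {t | (Hᶜ).Reachable z t}, t ≠ z) →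
          ∃ x y : W, x ≠ y ∧ TwinsPt H x y := by
        intro z w hzw ⟨t0, ht0, ht0z⟩
        set S : Set W := {t | (Hᶜ).Reachable z t} with hSdef
        have hzS : z ∈ S := Reachable.refl z
        have hwS : w ∉ S := hzw
        have hco : ∀ a ∈ S, ∀ b, b ∉ S → H.Adj a b := by
          intro a ha b hb
          by_contra hadj
          have hne_ab : a ≠ b := by rintro rfl; exact hb ha
          have : (Hᶜ).Adj a b := ⟨hne_ab, hadj⟩
          exact hb (ha.trans this.reachable)
        have hcardlt : Fintype.card ↥S < n := by
          rw [← hn]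
          exact Fintype.card_subtype_lt (p := fun t => t ∈ S) hwS
        have hcard2 : 2 ≤ Fintype.card ↥S := by
          have : (⟨t0, ht0⟩ : ↥S) ≠ ⟨z, hzS⟩ := fun h => ht0z (congrArg Subtype.val h)
          haveI : Nontrivial ↥S := ⟨_, _, this⟩
          exact Fintype.one_lt_card
        obtain ⟨p, q, hpq, hTw⟩ := IH (Fintype.card ↥S) hcardlt (H.induce S) rfl hcard2 (hP4ind S)
        exact twins_lift_coclosed hco (fun h => hpq h) hTw
      by_cases hx : ∃ t ∈ {t | (Hᶜ).Reachable x t}, t ≠ x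
      · exact main x y hxy hx
      · by_cases hy : ∃ t ∈ {t | (Hᶜ).Reachable y t}, t ≠ y
        · exact main y x (fun h => hxy h.symm) hy
        · push_neg at hx hy
          refine ⟨x, y, hxyne, Or.inr fun t => ?_⟩
          constructor
          · intro _
            by_cases hty : t = y
            · exact Or.inl hty
            · exact Or.inr (key y hy t hty)
          · intro _
            by_cases htx : t = x
            · exact Or.inl htx
            · exact Or.inr (key x hx t htx)
  · push_neg at hpre
    obtain ⟨x, y, hxy⟩ := hpre
    have hxyne : x ≠ y := fun h => hxy (h ▸ Reachable.refl x)
    have main : ∀ z w : W, ¬H.Reachable z w →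
        (∃ t ∈ {t | H.Reachable z t}, t ≠ z) →
        ∃ x y : W, x ≠ y ∧ TwinsPt H x y := by
      intro z w hzw ⟨t0, ht0, ht0z⟩
      set S : Set W := {t | H.Reachable z t} with hSdef
      have hzS : z ∈ S := Reachable.refl z
      have hwS : w ∉ S := hzw
      have hcl : ∀ a ∈ S, ∀ b, H.Adj a b → b ∈ S := by
        intro a ha b hadj
        exact ha.trans hadj.reachable
      have hcardlt : Fintype.card ↥S < n := by
        rw [← hn]
        exact Fintype.card_subtype_lt (p := fun t => t ∈ S) hwS
      have hcard2 : 2 ≤ Fintype.card ↥S := by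
        have : (⟨t0, ht0⟩ : ↥S) ≠ ⟨z, hzS⟩ := fun h => ht0z (congrArg Subtype.val h)
        haveI : Nontrivial ↥S := ⟨_, _, this⟩
        exact Fintype.one_lt_card
      obtain ⟨p, q, hpq, hTw⟩ := IH (Fintype.card ↥S) hcardlt (H.induce S) rfl hcard2 (hP4ind S)
      exact twins_lift_closed hcl (fun h => hpq h) hTw
    by_cases hx : ∃ t ∈ {t | H.Reachable x t}, t ≠ x
    · exact main x y hxy hx
    · by_cases hy : ∃ t ∈ {t | H.Reachable y t}, t ≠ y
      · exact main y x (fun h => hxy h.symm) hy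
      · push_neg at hx hy
        refine ⟨x, y, hxyne, Or.inl fun t => ?_⟩
        constructor
        · intro h
          exact absurd (hx t h.reachable) (fun hh => H.irrefl (hh ▸ h))
        · intro h
          exact absurd (hy t h.reachable) (fun hh => H.irrefl (hh ▸ h))
end Generic
set_option linter.unusedSectionVars false
section GraphMain
variable {V : Type u} [Fintype V] {G : SimpleGraph V}

lemma level_adj (hconn : G.Connected) (u : V) {a b : V} (h : G.Adj a b) :
    G.dist u b ≤ G.dist u a + 1 := by
  have h1 : G.dist u b ≤ G.dist u a + G.dist a b := hconn.dist_triangle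
  have h2 : G.dist a b ≤ 1 := by
    have := SimpleGraph.dist_le (SimpleGraph.Walk.cons h SimpleGraph.Walk.nil)
    simpa using this
  omega

lemma dist_zero_of_conn (hconn : G.Connected) {u a : V} (h : G.dist u a = 0) : u = a :=
  (hconn.dist_eq_zero_iff).mp h

lemma down_neighbor (hconn : G.Connected) {u z : V} {n : ℕ} (h : G.dist u z = n + 1) :
    ∃ y, G.Adj y z ∧ G.dist u y = n := by
  obtain ⟨p, hp⟩ := (hconn.preconnected u z).exists_walk_length_eq_dist
  have hrl : p.reverse.length = n + 1 := by
    rw [SimpleGraph.Walk.length_reverse, hp, h]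
  cases hq : p.reverse with
  | nil => rw [hq] at hrl; simp at hrl
  | @cons _ y _ hzy q =>
    rw [hq] at hrl
    simp only [SimpleGraph.Walk.length_cons] at hrl
    have hdy : G.dist u y ≤ n := by
      have := SimpleGraph.dist_le q.reverse
      rw [SimpleGraph.Walk.length_reverse] at this
      omega
    have hdz : G.dist u z ≤ G.dist u y + 1 := level_adj hconn u hzy.symm
    exact ⟨y, hzy.symm, by omega⟩

lemma chain_exists (hconn : G.Connected) (u : V) :
    ∀ (n : ℕ) (z : V), G.dist u z = n →
      ∃ c : ℕ → V, c n = z ∧ (∀ j, j ≤ n → G.dist u (c j) = j) ∧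
        ∀ j, j < n → G.Adj (c j) (c (j + 1)) := by
  intro n
  induction n with
  | zero =>
    intro z hz
    refine ⟨fun _ => z, rfl, ?_, fun j hj => by omega⟩
    intro j hj
    have : j = 0 := by omega
    subst this
    simpa using hz
  | succ n ih =>
    intro z hz
    obtain ⟨y, hyz, hy⟩ := down_neighbor hconn hz
    obtain ⟨c, hc1, hc2, hc3⟩ := ih y hy
    refine ⟨fun j => if j = n + 1 then z else c j, by simp, ?_, ?_⟩
    · intro j hj
      by_cases h : j = n + 1
      · simp [h, hz]
      · have : j ≤ n := by omega
        simp [h, hc2 j this]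
    · intro j hj
      by_cases h : j = n
      · subst h
        simp only [if_pos rfl, if_neg (by omega : ¬j = j + 1)]
        rw [hc1]; exact hyz
      · have h1 : ¬j = n + 1 := by omega
        have h2 : ¬j + 1 = n + 1 := by omega
        simp only [if_neg h1, if_neg h2]
        exact hc3 j (by omega)

lemma DHC (hDH : DistanceHereditary G)
    (S : Set V) (f : V → ℕ) {s₀ t : V} (hs₀ : s₀ ∈ S) (ht : t ∈ S)
    (hf : ∀ a b, a ∈ S → b ∈ S → G.Adj a b → f b ≤ f a + 1)
    (hreach : ∀ a, (ha : a ∈ S) → (G.induce S).Reachable ⟨s₀, hs₀⟩ ⟨a, ha⟩)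
    (hlt : G.dist s₀ t + f s₀ < f t) : False := by
  have hpre : (G.induce S).Preconnected := by
    intro a b
    have ha := hreach a.1 a.2
    have hb := hreach b.1 b.2
    exact ha.symm.trans hb
  haveI : Nonempty ↥S := ⟨⟨s₀, hs₀⟩⟩
  have hconnS : (G.induce S).Connected := SimpleGraph.Connected.mk hpre
  have hd := hDH S hconnS ⟨s₀, hs₀⟩ ⟨t, ht⟩
  have hlip := lip_dist (H := G.induce S) (fun x => f x.1)
    (fun a b hab => hf a.1 b.1 a.2 b.2 hab) (hreach t ht)
  rw [hd] at hlip
  have hlip2 : f t ≤ f s₀ + G.dist s₀ t := hlip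
  omega
lemma path4_violation (hDH : DistanceHereditary G)
    {a b c d : V} (hab : G.Adj a b) (hbc : G.Adj b c) (hcd : G.Adj c d)
    (hac : ¬G.Adj a c) (had : ¬G.Adj a d) (hbd : ¬G.Adj b d)
    (hdist : G.dist a d ≤ 2) : False := by
  classical
  have hP : IndP4 G a b c d := ⟨hab, hbc, hcd, hac, had, hbd⟩
  obtain ⟨n1, n2, n3, n4, n5, n6⟩ := hP.distinct
  set S : Set V := {a, b, c, d} with hS
  have hma : a ∈ S := by simp [hS]
  have hmb : b ∈ S := by simp [hS]
  have hmc : c ∈ S := by simp [hS]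
  have hmd : d ∈ S := by simp [hS]
  set f : V → ℕ := fun t => if t = b then 1 else if t = c then 2 else if t = d then 3 else 0
    with hfdef
  have Ha : f a = 0 := by simp [hfdef, n1, n2, n3]
  have Hb : f b = 1 := by simp [hfdef]
  have Hc : f c = 2 := by simp [hfdef, n4.symm]
  have Hd : f d = 3 := by simp [hfdef, n5.symm, n6.symm]
  have hf : ∀ p q, p ∈ S → q ∈ S → G.Adj p q → f q ≤ f p + 1 := by
    intro p q hp hq hadj
    simp only [hS, Set.mem_insert_iff, Set.mem_singleton_iff] at hp hq
    rcases hp with rfl | rfl | rfl | rfl <;> rcases hq with rfl | rfl | rfl | rfl <;>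
      simp only [Ha, Hb, Hc, Hd] <;>
      first
        | omega
        | exact absurd hadj hac
        | exact absurd hadj had
        | exact absurd hadj hbd
  have eab : (G.induce S).Adj ⟨a, hma⟩ ⟨b, hmb⟩ := hab
  have ebc : (G.induce S).Adj ⟨b, hmb⟩ ⟨c, hmc⟩ := hbc
  have ecd : (G.induce S).Adj ⟨c, hmc⟩ ⟨d, hmd⟩ := hcd
  have hreach : ∀ t, (ht : t ∈ S) → (G.induce S).Reachable ⟨a, hma⟩ ⟨t, ht⟩ := by
    intro t ht
    have ht' := ht
    simp only [hS, Set.mem_insert_iff, Set.mem_singleton_iff] at ht'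
    rcases ht' with rfl | rfl | rfl | rfl
    · exact SimpleGraph.Reachable.refl _
    · exact eab.reachable
    · exact (eab.reachable).trans ebc.reachable
    · exact ((eab.reachable).trans ebc.reachable).trans ecd.reachable
  exact DHC hDH S f hma hmd hf hreach (by omega)

lemma path5_violation (hDH : DistanceHereditary G)
    {a b c d e : V} (hab : G.Adj a b) (hbc : G.Adj b c) (hcd : G.Adj c d) (hde : G.Adj d e)
    (hac : ¬G.Adj a c) (had : ¬G.Adj a d) (hae : ¬G.Adj a e)
    (hbd : ¬G.Adj b d) (hbe : ¬G.Adj b e) (hce : ¬G.Adj c e)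
    (hdist : G.dist a e ≤ 3) : False := by
  classical
  have n1 : a ≠ b := hab.ne
  have n2 : a ≠ c := by rintro rfl; exact had hcd
  have n3 : a ≠ d := by rintro rfl; exact hae hde
  have n4 : a ≠ e := by rintro rfl; exact had hde.symm
  have n5 : b ≠ c := hbc.ne
  have n6 : b ≠ d := by rintro rfl; exact hbe hde
  have n7 : b ≠ e := by rintro rfl; exact hae hab
  have n8 : c ≠ d := hcd.ne
  have n9 : c ≠ e := by rintro rfl; exact hbe hbc
  have n10 : d ≠ e := hde.ne
  set S : Set V := {a, b, c, d, e} with hS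
  have hma : a ∈ S := by simp [hS]
  have hmb : b ∈ S := by simp [hS]
  have hmc : c ∈ S := by simp [hS]
  have hmd : d ∈ S := by simp [hS]
  have hme : e ∈ S := by simp [hS]
  set f : V → ℕ := fun t => if t = b then 1 else if t = c then 2 else if t = d then 3
    else if t = e then 4 else 0 with hfdef
  have Ha : f a = 0 := by simp [hfdef, n1, n2, n3, n4]
  have Hb : f b = 1 := by simp [hfdef]
  have Hc : f c = 2 := by simp [hfdef, n5.symm]
  have Hd : f d = 3 := by simp [hfdef, n6.symm, n8.symm]
  have He : f e = 4 := by simp [hfdef, n7.symm, n9.symm, n10.symm]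
  have hf : ∀ p q, p ∈ S → q ∈ S → G.Adj p q → f q ≤ f p + 1 := by
    intro p q hp hq hadj
    simp only [hS, Set.mem_insert_iff, Set.mem_singleton_iff] at hp hq
    rcases hp with rfl | rfl | rfl | rfl | rfl <;> rcases hq with rfl | rfl | rfl | rfl | rfl <;>
      simp only [Ha, Hb, Hc, Hd, He] <;>
      first
        | omega
        | exact absurd hadj hac
        | exact absurd hadj had
        | exact absurd hadj hae
        | exact absurd hadj hbd
        | exact absurd hadj hbe
        | exact absurd hadj hce
  have eab : (G.induce S).Adj ⟨a, hma⟩ ⟨b, hmb⟩ := hab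
  have ebc : (G.induce S).Adj ⟨b, hmb⟩ ⟨c, hmc⟩ := hbc
  have ecd : (G.induce S).Adj ⟨c, hmc⟩ ⟨d, hmd⟩ := hcd
  have ede : (G.induce S).Adj ⟨d, hmd⟩ ⟨e, hme⟩ := hde
  have hreach : ∀ t, (ht : t ∈ S) → (G.induce S).Reachable ⟨a, hma⟩ ⟨t, ht⟩ := by
    intro t ht
    have ht' := ht
    simp only [hS, Set.mem_insert_iff, Set.mem_singleton_iff] at ht'
    rcases ht' with rfl | rfl | rfl | rfl | rfl
    · exact SimpleGraph.Reachable.refl _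
    · exact eab.reachable
    · exact (eab.reachable).trans ebc.reachable
    · exact ((eab.reachable).trans ebc.reachable).trans ecd.reachable
    · exact (((eab.reachable).trans ebc.reachable).trans ecd.reachable).trans ede.reachable
  exact DHC hDH S f hma hme hf hreach (by omega)
lemma LA (hconn : G.Connected) (hDH : DistanceHereditary G) (u : V)
    {x y z : V} (hxy : G.Adj x y) (hlev : G.dist u x = G.dist u y)
    (hzx : G.Adj z x) (hz : G.dist u z + 1 = G.dist u x) : G.Adj z y := by
  classical
  by_contra hzy
  obtain ⟨c, hc1, hc2, hc3⟩ := chain_exists hconn u (G.dist u z) z rfl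
  set n := G.dist u z with hn
  set i := G.dist u x with hi
  have hilev : G.dist u y = i := hlev.symm
  have hni : n + 1 = i := hz
  set S : Set V := {t | ∃ j ≤ n, c j = t} ∪ {x, y} with hS
  have hxS : x ∈ S := Or.inr (by simp)
  have hyS : y ∈ S := Or.inr (by simp)
  have hzS : z ∈ S := Or.inl ⟨n, le_rfl, hc1⟩
  have hc0 : c 0 = u := (dist_zero_of_conn hconn (hc2 0 (Nat.zero_le n))).symm
  have huS : u ∈ S := Or.inl ⟨0, Nat.zero_le n, hc0⟩
  have hchain_ne_y : ∀ j, j ≤ n → c j ≠ y := by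
    intro j hj heq
    have := hc2 j hj
    rw [heq, hilev] at this
    omega
  set f : V → ℕ := fun t => if t = y then i + 1 else G.dist u t with hfdef
  have Hy : f y = i + 1 := by simp [hfdef]
  have Hother : ∀ t, t ≠ y → f t = G.dist u t := by
    intro t ht; simp [hfdef, ht]
  have hf : ∀ p q, p ∈ S → q ∈ S → G.Adj p q → f q ≤ f p + 1 := by
    intro p q hp hq hadj
    by_cases hq' : q = y
    · rw [hq'] at hadj ⊢
      rw [Hy]
      rcases hp with ⟨j, hj, rfl⟩ | hp
      · exfalso
        have h1 : G.dist u y ≤ G.dist u (c j) + 1 := level_adj hconn u hadj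
        rw [hc2 j hj, hilev] at h1
        have hjn : j = n := by omega
        subst hjn
        rw [hc1] at hadj
        exact hzy hadj
      · simp only [Set.mem_insert_iff, Set.mem_singleton_iff] at hp
        rcases hp with rfl | rfl
        · rw [Hother p hxy.ne, ← hi]
        · exact absurd rfl hadj.ne
    · rw [Hother q hq']
      by_cases hp' : p = y
      · rw [hp'] at hadj
        have h1 : G.dist u q ≤ G.dist u y + 1 := level_adj hconn u hadj
        rw [hp', Hy, hilev] at *
        omega
      · rw [Hother p hp']
        exact level_adj hconn u hadj
  have hreach : ∀ t, (ht : t ∈ S) → (G.induce S).Reachable ⟨u, huS⟩ ⟨t, ht⟩ := by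
    have aux : ∀ j, (hj : j ≤ n) →
        (G.induce S).Reachable ⟨u, huS⟩ ⟨c j, Or.inl ⟨j, hj, rfl⟩⟩ := by
      intro j
      induction j with
      | zero =>
        intro hj
        have e : (⟨c 0, Or.inl ⟨0, hj, rfl⟩⟩ : ↥S) = ⟨u, huS⟩ := Subtype.ext hc0
        rw [e]
      | succ j ih =>
        intro hj
        have hj' : j ≤ n := by omega
        have estep : (G.induce S).Adj ⟨c j, Or.inl ⟨j, hj', rfl⟩⟩ ⟨c (j+1), Or.inl ⟨j+1, hj, rfl⟩⟩ :=
          hc3 j (by omega)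
        exact (ih hj').trans estep.reachable
    have hreach_z : (G.induce S).Reachable ⟨u, huS⟩ ⟨z, hzS⟩ := by
      have e : (⟨c n, Or.inl ⟨n, le_rfl, rfl⟩⟩ : ↥S) = ⟨z, hzS⟩ := Subtype.ext hc1
      rw [← e]
      exact aux n le_rfl
    have hreach_x : (G.induce S).Reachable ⟨u, huS⟩ ⟨x, hxS⟩ := by
      have estep : (G.induce S).Adj ⟨z, hzS⟩ ⟨x, hxS⟩ := hzx
      exact hreach_z.trans estep.reachable
    have hreach_y : (G.induce S).Reachable ⟨u, huS⟩ ⟨y, hyS⟩ := by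
      have estep : (G.induce S).Adj ⟨x, hxS⟩ ⟨y, hyS⟩ := hxy
      exact hreach_x.trans estep.reachable
    intro t ht
    rcases ht with ⟨j, hj, rfl⟩ | ht'
    · exact aux j hj
    · simp only [Set.mem_insert_iff, Set.mem_singleton_iff] at ht'
      rcases ht' with rfl | rfl
      · exact hreach_x
      · exact hreach_y
  have huy : u ≠ y := by
    intro h
    have : G.dist u y = 0 := by rw [← h]; exact SimpleGraph.dist_self
    omega
  refine DHC hDH S f huS hyS hf hreach ?_
  rw [Hy, Hother u huy, SimpleGraph.dist_self, hilev]
  omega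

lemma LAC (hconn : G.Connected) (hDH : DistanceHereditary G) (u : V)
    {x y z w : V} (hlev : G.dist u x = G.dist u y) (hnxy : ¬G.Adj x y)
    (hwx : G.Adj w x) (hwy : G.Adj w y) (hwlev : G.dist u w = G.dist u x + 1)
    (hzx : G.Adj z x) (hz : G.dist u z + 1 = G.dist u x) : G.Adj z y := by
  classical
  by_contra hzy
  have hxy_ne : x ≠ y := by rintro rfl; exact hzy hzx
  obtain ⟨c, hc1, hc2, hc3⟩ := chain_exists hconn u (G.dist u z) z rfl
  set n := G.dist u z with hn
  set i := G.dist u x with hi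
  have hylev : G.dist u y = i := hlev.symm
  have hni : n + 1 = i := hz
  set S : Set V := {t | ∃ j ≤ n, c j = t} ∪ {x, w, y} with hS
  have hxS : x ∈ S := Or.inr (by simp)
  have hwS : w ∈ S := Or.inr (by simp)
  have hyS : y ∈ S := Or.inr (by simp)
  have hzS : z ∈ S := Or.inl ⟨n, le_rfl, hc1⟩
  have hc0 : c 0 = u := (dist_zero_of_conn hconn (hc2 0 (Nat.zero_le n))).symm
  have huS : u ∈ S := Or.inl ⟨0, Nat.zero_le n, hc0⟩
  have hyw_ne : y ≠ w := by
    intro h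
    rw [← h] at hwlev
    omega
  have hxw_ne : x ≠ w := by
    intro h
    rw [← h] at hwlev
    omega
  set f : V → ℕ := fun t => if t = y then i + 2 else if t = w then i + 1 else G.dist u t
    with hfdef
  have Hy : f y = i + 2 := by simp [hfdef]
  have Hw : f w = i + 1 := by simp [hfdef, hyw_ne.symm]
  have Hother : ∀ t, t ≠ y → t ≠ w → f t = G.dist u t := by
    intro t ht1 ht2; simp [hfdef, ht1, ht2]
  have hf : ∀ p q, p ∈ S → q ∈ S → G.Adj p q → f q ≤ f p + 1 := by
    intro p q hp hq hadj
    by_cases hq1 : q = y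
    · rw [hq1] at hadj ⊢
      rw [Hy]
      rcases hp with ⟨j, hj, rfl⟩ | hp
      · exfalso
        have h1 : G.dist u y ≤ G.dist u (c j) + 1 := level_adj hconn u hadj
        rw [hc2 j hj, hylev] at h1
        have hjn : j = n := by omega
        subst hjn
        rw [hc1] at hadj
        exact hzy hadj
      · simp only [Set.mem_insert_iff, Set.mem_singleton_iff] at hp
        rcases hp with rfl | rfl | rfl
        · exact absurd hadj hnxy
        · rw [Hw]
        · exact absurd rfl hadj.ne
    · by_cases hq2 : q = w
      · rw [hq2] at hadj ⊢
        rw [Hw]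
        rcases hp with ⟨j, hj, rfl⟩ | hp
        · exfalso
          have h1 : G.dist u w ≤ G.dist u (c j) + 1 := level_adj hconn u hadj
          rw [hc2 j hj, hwlev] at h1
          omega
        · simp only [Set.mem_insert_iff, Set.mem_singleton_iff] at hp
          rcases hp with rfl | rfl | rfl
          · rw [Hother p hxy_ne hxw_ne, ← hi]
          · exact absurd rfl hadj.ne
          · rw [Hy]; omega
      · rw [Hother q hq1 hq2]
        have h1 : G.dist u q ≤ G.dist u p + 1 := level_adj hconn u hadj
        by_cases hp1 : p = y
        · rw [hp1] at h1; rw [hp1, Hy]; rw [hylev] at h1; omega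
        · by_cases hp2 : p = w
          · rw [hp2] at h1; rw [hp2, Hw]; rw [hwlev] at h1; omega
          · rw [Hother p hp1 hp2]; omega
  have hreach : ∀ t, (ht : t ∈ S) → (G.induce S).Reachable ⟨u, huS⟩ ⟨t, ht⟩ := by
    have aux : ∀ j, (hj : j ≤ n) →
        (G.induce S).Reachable ⟨u, huS⟩ ⟨c j, Or.inl ⟨j, hj, rfl⟩⟩ := by
      intro j
      induction j with
      | zero =>
        intro hj
        have e : (⟨c 0, Or.inl ⟨0, hj, rfl⟩⟩ : ↥S) = ⟨u, huS⟩ := Subtype.ext hc0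
        rw [e]
      | succ j ih =>
        intro hj
        have hj' : j ≤ n := by omega
        have estep : (G.induce S).Adj ⟨c j, Or.inl ⟨j, hj', rfl⟩⟩ ⟨c (j+1), Or.inl ⟨j+1, hj, rfl⟩⟩ :=
          hc3 j (by omega)
        exact (ih hj').trans estep.reachable
    have hreach_z : (G.induce S).Reachable ⟨u, huS⟩ ⟨z, hzS⟩ := by
      have e : (⟨c n, Or.inl ⟨n, le_rfl, rfl⟩⟩ : ↥S) = ⟨z, hzS⟩ := Subtype.ext hc1
      rw [← e]
      exact aux n le_rfl
    have hreach_x : (G.induce S).Reachable ⟨u, huS⟩ ⟨x, hxS⟩ := by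
      have estep : (G.induce S).Adj ⟨z, hzS⟩ ⟨x, hxS⟩ := hzx
      exact hreach_z.trans estep.reachable
    have hreach_w : (G.induce S).Reachable ⟨u, huS⟩ ⟨w, hwS⟩ := by
      have estep : (G.induce S).Adj ⟨x, hxS⟩ ⟨w, hwS⟩ := hwx.symm
      exact hreach_x.trans estep.reachable
    have hreach_y : (G.induce S).Reachable ⟨u, huS⟩ ⟨y, hyS⟩ := by
      have estep : (G.induce S).Adj ⟨w, hwS⟩ ⟨y, hyS⟩ := hwy
      exact hreach_w.trans estep.reachable
    intro t ht
    rcases ht with ⟨j, hj, rfl⟩ | ht'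
    · exact aux j hj
    · simp only [Set.mem_insert_iff, Set.mem_singleton_iff] at ht'
      rcases ht' with rfl | rfl | rfl
      · exact hreach_x
      · exact hreach_w
      · exact hreach_y
  have huy : u ≠ y := by
    intro h
    have : G.dist u y = 0 := by rw [← h]; exact SimpleGraph.dist_self
    omega
  have huw : u ≠ w := by
    intro h
    have : G.dist u w = 0 := by rw [← h]; exact SimpleGraph.dist_self
    omega
  refine DHC hDH S f huS hyS hf hreach ?_
  rw [Hy, Hother u huy huw, SimpleGraph.dist_self, hylev]
  omega
end GraphMain

/-- every finite connected distance-hereditary graph on at least two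
vertices has a pendant vertex, a true twin, or a false twin. -/
theorem exists_pendant_or_twin_of_distanceHereditary {V : Type*} [Fintype V]
    (G : SimpleGraph V) (hcard : 2 ≤ Fintype.card V)
    (hconn : G.Connected) (hDH : DistanceHereditary G) :
    ∃ y : V, (∃ w : V, G.neighborSet y = {w}) ∨
      (∃ x : V, x ≠ y ∧ insert x (G.neighborSet x) = insert y (G.neighborSet y)) ∨
      (∃ x : V, x ≠ y ∧ G.neighborSet x = G.neighborSet y) := by
  classical
  obtain ⟨u⟩ : Nonempty V := Fintype.card_pos_iff.mp (by omega)
  obtain ⟨m, -, hm⟩ := Finset.exists_max_image (Finset.univ : Finset V) (G.dist u)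
    ⟨u, Finset.mem_univ u⟩
  set k := G.dist u m with hkdef
  have hmax : ∀ x : V, G.dist u x ≤ k := fun x => hm x (Finset.mem_univ x)
  have hk1 : 1 ≤ k := by
    obtain ⟨w, hw⟩ := Fintype.exists_ne_of_one_lt_card (by omega) u
    have h0 : G.dist u w ≠ 0 := fun h => hw (dist_zero_of_conn hconn h).symm
    have := hmax w; omega
  have output : ∀ x y : V, x ≠ y → TwinsPt G x y →
      ∃ y : V, (∃ w : V, G.neighborSet y = {w}) ∨
        (∃ x : V, x ≠ y ∧ insert x (G.neighborSet x) = insert y (G.neighborSet y)) ∨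
        (∃ x : V, x ≠ y ∧ G.neighborSet x = G.neighborSet y) := by
    intro x y hxy hTw
    rcases hTw with h | h
    · refine ⟨y, Or.inr (Or.inr ⟨x, hxy, ?_⟩)⟩
      ext t
      simpa using h t
    · refine ⟨y, Or.inr (Or.inl ⟨x, hxy, ?_⟩)⟩
      ext t
      simpa [Set.mem_insert_iff] using h t
  by_cases hNkadj : ∃ x y : V, G.dist u x = k ∧ G.dist u y = k ∧ G.Adj x y
  -- ============ CASE A : some edge inside the top level ============
  · obtain ⟨x0, y0, hx0, hy0, hxy0⟩ := hNkadj
    set step : V → V → Prop := fun a b => G.dist u a = k ∧ G.dist u b = k ∧ G.Adj a b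
      with hstepdef
    set C : Set V := {t | Relation.ReflTransGen step x0 t} with hC
    have hx0C : x0 ∈ C := Relation.ReflTransGen.refl
    have hy0C : y0 ∈ C := Relation.ReflTransGen.single ⟨hx0, hy0, hxy0⟩
    have hCk : ∀ t ∈ C, G.dist u t = k := by
      intro t ht
      simp only [hC, Set.mem_setOf_eq] at ht
      induction ht with
      | refl => exact hx0
      | tail hab hbc ih => exact hbc.2.1
    have hCcl : ∀ t ∈ C, ∀ s, G.dist u s = k → G.Adj t s → s ∈ C :=
      fun t ht s hs hadj => Relation.ReflTransGen.tail ht ⟨hCk t ht, hs, hadj⟩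
    have hdown : ∀ t ∈ C, ∀ z, G.dist u z + 1 = k → (G.Adj z x0 ↔ G.Adj z t) := by
      intro t ht
      simp only [hC, Set.mem_setOf_eq] at ht
      induction ht with
      | refl => intro z hz; exact Iff.rfl
      | @tail b t' hab hbc ih =>
        intro z hz
        have hlevb : G.dist u b = G.dist u t' := hbc.1.trans hbc.2.1.symm
        constructor
        · intro h
          exact LA hconn hDH u hbc.2.2 hlevb ((ih z hz).mp h) (by rw [hbc.1]; omega)
        · intro h
          exact (ih z hz).mpr (LA hconn hDH u hbc.2.2.symm hlevb.symm h (by rw [hbc.2.1]; omega))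
    obtain ⟨z0, hz0x0, hz0lev⟩ : ∃ z0, G.Adj z0 x0 ∧ G.dist u z0 + 1 = k := by
      have hx0' : G.dist u x0 = (k - 1) + 1 := by omega
      obtain ⟨z0, h1, h2⟩ := down_neighbor hconn hx0'
      exact ⟨z0, h1, by omega⟩
    have hz0C : ∀ t ∈ C, G.Adj z0 t := fun t ht => (hdown t ht z0 hz0lev).mp hz0x0
    have hP4C : ∀ a b c d : ↥C, ¬IndP4 (G.induce C) a b c d := by
      intro a b c d hP
      have hP' := hP.of_induce
      refine path4_violation hDH hP'.1 hP'.2.1 hP'.2.2.1 hP'.2.2.2.1 hP'.2.2.2.2.1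
        hP'.2.2.2.2.2 ?_
      have hd2 := SimpleGraph.dist_le (SimpleGraph.Walk.cons (hz0C a.1 a.2).symm
        (SimpleGraph.Walk.cons (hz0C d.1 d.2) SimpleGraph.Walk.nil))
      simpa using hd2
    haveI : Nontrivial ↥C :=
      ⟨⟨x0, hx0C⟩, ⟨y0, hy0C⟩, fun h => hxy0.ne (congrArg Subtype.val h)⟩
    obtain ⟨p, q, hpq, hTw⟩ := COG (Fintype.card ↥C) (G.induce C) rfl
      Fintype.one_lt_card hP4C
    apply output p.1 q.1 (fun h => hpq (Subtype.ext h))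
    have hsplit : ∀ (s : ↥C) (t : V), G.Adj s.1 t →
        (G.dist u t = k ∨ G.dist u t + 1 = k) := by
      intro s t hadj
      have h1 := level_adj hconn u hadj
      have h2 := level_adj hconn u hadj.symm
      have h3 := hmax t
      have h4 := hCk s.1 s.2
      omega
    have hdown2 : ∀ (r s : ↥C) (t : V), G.dist u t + 1 = k → G.Adj r.1 t → G.Adj s.1 t := by
      intro r s t hlev h
      exact ((hdown s.1 s.2 t hlev).mp ((hdown r.1 r.2 t hlev).mpr h.symm)).symm
    rcases hTw with hTw | hTw
    · left; intro t
      constructor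
      · intro h
        rcases hsplit p t h with hk' | hk'
        · have htC : t ∈ C := hCcl p.1 p.2 t hk' h
          exact (hTw ⟨t, htC⟩).mp h
        · exact hdown2 p q t hk' h
      · intro h
        rcases hsplit q t h with hk' | hk'
        · have htC : t ∈ C := hCcl q.1 q.2 t hk' h
          exact (hTw ⟨t, htC⟩).mpr h
        · exact hdown2 q p t hk' h
    · right; intro t
      constructor
      · rintro (rfl | h)
        · rcases (hTw ⟨p.1, p.2⟩).mp (Or.inl rfl) with h' | h'
          · exact Or.inl (congrArg Subtype.val h')
          · exact Or.inr h'
        · rcases hsplit p t h with hk' | hk'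
          · have htC : t ∈ C := hCcl p.1 p.2 t hk' h
            rcases (hTw ⟨t, htC⟩).mp (Or.inr h) with h' | h'
            · exact Or.inl (congrArg Subtype.val h')
            · exact Or.inr h'
          · exact Or.inr (hdown2 p q t hk' h)
      · rintro (rfl | h)
        · rcases (hTw ⟨q.1, q.2⟩).mpr (Or.inl rfl) with h' | h'
          · exact Or.inl (congrArg Subtype.val h')
          · exact Or.inr h'
        · rcases hsplit q t h with hk' | hk'
          · have htC : t ∈ C := hCcl q.1 q.2 t hk' h
            rcases (hTw ⟨t, htC⟩).mpr (Or.inr h) with h' | h'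
            · exact Or.inl (congrArg Subtype.val h')
            · exact Or.inr h'
          · exact Or.inr (hdown2 q p t hk' h)
  -- ============ CASE B : top level is edgeless ============
  · push_neg at hNkadj
    by_cases hpend : ∃ v, G.dist u v = k ∧ ∃ w, G.neighborSet v = {w}
    · obtain ⟨v, -, w, hw⟩ := hpend
      exact ⟨v, Or.inl ⟨w, hw⟩⟩
    · push_neg at hpend
      have htwo : ∀ v, G.dist u v = k → ∃ d1 d2, d1 ≠ d2 ∧ G.Adj v d1 ∧ G.Adj v d2 := by
        intro v hv
        have hv' : G.dist u v = (k - 1) + 1 := by omega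
        obtain ⟨d1, hd1, hd1lev⟩ := down_neighbor hconn hv'
        have hd1' : G.Adj v d1 := hd1.symm
        have hns : ¬ G.neighborSet v ⊆ {d1} := by
          intro hsub
          refine hpend v hv d1 (Set.Subset.antisymm hsub ?_)
          simpa [Set.singleton_subset_iff] using hd1'
        obtain ⟨d2, hd2, hd2ne⟩ := Set.not_subset.mp hns
        exact ⟨d2, d1, by simpa using hd2ne, hd2, hd1'⟩
      by_cases hdup : ∃ v v' : V, G.dist u v = k ∧ G.dist u v' = k ∧ v ≠ v' ∧
          ∀ t, G.Adj v t ↔ G.Adj v' t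
      · obtain ⟨v, v', -, -, hne', hiff⟩ := hdup
        exact output v v' hne' (Or.inl hiff)
      · push_neg at hdup
        obtain ⟨v, hvmem, hvmin⟩ := Finset.exists_min_image
          (Finset.univ.filter (fun x => G.dist u x = k))
          (fun x => (G.neighborSet x).ncard)
          ⟨m, by simp [hkdef]⟩
        have hv : G.dist u v = k := (Finset.mem_filter.mp hvmem).2
        set D : Set V := G.neighborSet v with hD
        have hDlev : ∀ d ∈ D, G.dist u d + 1 = k := by
          intro d hd
          have hadj : G.Adj v d := hd
          have h1 := level_adj hconn u hadj
          have h2 := level_adj hconn u hadj.symm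
          have h3 := hmax d
          have h4 : G.dist u d ≠ k := fun h => hNkadj v d hv h hadj
          omega
        obtain ⟨d1, d2, hd12ne, hvd1, hvd2⟩ := htwo v hv
        have hd1D : d1 ∈ D := hvd1
        have hd2D : d2 ∈ D := hvd2
        have hk2 : 2 ≤ k := by
          by_contra hcon
          have e1 : G.dist u d1 = 0 := by have := hDlev d1 hd1D; omega
          have e2 : G.dist u d2 = 0 := by have := hDlev d2 hd2D; omega
          exact hd12ne ((dist_zero_of_conn hconn e1).symm.trans (dist_zero_of_conn hconn e2))
        have hDdown : ∀ d ∈ D, ∀ d' ∈ D, ∀ z, G.Adj z d → G.dist u z + 2 = k →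
            G.Adj z d' := by
          intro d hd d' hd' z hzd hzlev
          have hdl := hDlev d hd
          have hd'l := hDlev d' hd'
          have hlevdd : G.dist u d = G.dist u d' := by omega
          by_cases hdd' : G.Adj d d'
          · exact LA hconn hDH u hdd' hlevdd hzd (by omega)
          · by_cases hdeq : d = d'
            · exact hdeq ▸ hzd
            · have hvd : G.Adj v d := hd
              have hvd' : G.Adj v d' := hd'
              exact LAC hconn hDH u hlevdd hdd' hvd hvd' (by omega) hzd (by omega)
        obtain ⟨z0, hz0d1, hz0lev⟩ : ∃ z0, G.Adj z0 d1 ∧ G.dist u z0 + 2 = k := by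
          have hd1' : G.dist u d1 = (k - 2) + 1 := by have := hDlev d1 hd1D; omega
          obtain ⟨z0, h1, h2⟩ := down_neighbor hconn hd1'
          exact ⟨z0, h1, by omega⟩
        have hz0D : ∀ d ∈ D, G.Adj z0 d := fun d hd => hDdown d1 hd1D d hd z0 hz0d1 hz0lev
        have hz0v : ¬G.Adj z0 v := by
          intro h
          have := level_adj hconn u h
          omega
        have hnod : ∀ d ∈ D, ∀ d' ∈ D, ∀ s, s ∉ D → s ≠ v → G.Adj s d → G.Adj s d' := by
          intro d hd d' hd' s hsD hsv hsd
          by_contra hsd'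
          have hdlev := hDlev d hd
          have hd'lev := hDlev d' hd'
          have h1 := level_adj hconn u hsd
          have h2 := level_adj hconn u hsd.symm
          have h3 := hmax s
          have hvd : G.Adj v d := hd
          have hvd' : G.Adj v d' := hd'
          have hsv' : ¬G.Adj s v := fun h => hsD (SimpleGraph.mem_neighborSet G v s |>.mpr h.symm)
          have hdistsv : G.dist s v ≤ 2 := by
            have hd2 := SimpleGraph.dist_le (SimpleGraph.Walk.cons hsd
              (SimpleGraph.Walk.cons hvd.symm SimpleGraph.Walk.nil))
            simpa using hd2
          have hcases : G.dist u s + 2 = k ∨ G.dist u s + 1 = k ∨ G.dist u s = k := by omega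
          rcases hcases with hs | hs | hs
          · exact hsd' (hDdown d hd d' hd' s hsd hs)
          · -- s is at level k-1 : use path s - z0 - d' - v
            have hz0s : G.Adj z0 s :=
              LA hconn hDH u hsd.symm (by omega) (hz0D d hd) (by omega)
            exact path4_violation hDH hz0s.symm (hz0D d' hd') hvd'.symm hsd' hsv'
              hz0v hdistsv
          · -- s is at level k
            obtain ⟨e, hse, heD⟩ : ∃ e, G.Adj s e ∧ e ∉ D := by
              by_contra hall
              push_neg at hall
              have hsub : G.neighborSet s ⊆ D := fun t ht => hall t ht
              have hproper : G.neighborSet s ≠ D := by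
                intro heq
                obtain ⟨t, ht⟩ := hdup s v hs hv hsv
                rcases ht with ⟨ha1, ha2⟩ | ⟨ha1, ha2⟩
                · have : t ∈ G.neighborSet s := ha1
                  rw [heq] at this
                  exact ha2 this
                · have : t ∈ G.neighborSet s := by rw [heq]; exact ha2
                  exact ha1 this
              have hlt : (G.neighborSet s).ncard < D.ncard :=
                Set.ncard_lt_ncard ⟨hsub, fun hsup => hproper
                  (Set.Subset.antisymm hsub hsup)⟩ (Set.toFinite _)
              have h5 : D.ncard ≤ (G.neighborSet s).ncard :=
                hvmin s (Finset.mem_filter.mpr ⟨Finset.mem_univ s, hs⟩)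
              omega
            have hsv'' : ¬G.Adj s v := fun h => hNkadj s v hs hv h
            have helev : G.dist u e + 1 = k := by
              have g1 := level_adj hconn u hse
              have g2 := level_adj hconn u hse.symm
              have g3 := hmax e
              have g4 : G.dist u e ≠ k := fun h => hNkadj s e hs h hse
              omega
            have hz0e : G.Adj z0 e := by
              by_cases hde : G.Adj d e
              · exact LA hconn hDH u hde (by omega) (hz0D d hd) (by omega)
              · by_cases hdeq : d = e
                · exact hdeq ▸ (hz0D d hd)
                · exact LAC hconn hDH u (by omega) hde hsd hse (by omega)
                    (hz0D d hd) (by omega)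
            have hev : ¬G.Adj e v := fun h => heD (h.symm : G.Adj v e)
            by_cases hed' : G.Adj e d'
            · exact path4_violation hDH hse hed' hvd'.symm hsd' hsv'' hev hdistsv
            · refine path5_violation hDH hse hz0e.symm (hz0D d' hd') hvd'.symm
                ?_ hsd' hsv'' hed' hev hz0v (by omega)
              intro h
              have := level_adj hconn u h.symm
              omega
        have hP4D : ∀ a b c d : ↥D, ¬IndP4 (G.induce D) a b c d := by
          intro a b c d hP
          have hP' := hP.of_induce
          refine path4_violation hDH hP'.1 hP'.2.1 hP'.2.2.1 hP'.2.2.2.1 hP'.2.2.2.2.1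
            hP'.2.2.2.2.2 ?_
          have hva : G.Adj v a.1 := a.2
          have hvd : G.Adj v d.1 := d.2
          have hd2 := SimpleGraph.dist_le (SimpleGraph.Walk.cons hva.symm
            (SimpleGraph.Walk.cons hvd SimpleGraph.Walk.nil))
          simpa using hd2
        haveI : Nontrivial ↥D :=
          ⟨⟨d1, hd1D⟩, ⟨d2, hd2D⟩, fun h => hd12ne (congrArg Subtype.val h)⟩
        obtain ⟨p, q, hpq, hTw⟩ := COG (Fintype.card ↥D) (G.induce D) rfl
          Fintype.one_lt_card hP4D
        apply output p.1 q.1 (fun h => hpq (Subtype.ext h))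
        have hvp : G.Adj v p.1 := p.2
        have hvq : G.Adj v q.1 := q.2
        rcases hTw with hTw | hTw
        · left; intro t
          by_cases htD : t ∈ D
          · exact hTw ⟨t, htD⟩
          · by_cases htv : t = v
            · subst htv
              exact iff_of_true hvp.symm hvq.symm
            · constructor
              · intro h
                exact (hnod p.1 p.2 q.1 q.2 t htD htv h.symm).symm
              · intro h
                exact (hnod q.1 q.2 p.1 p.2 t htD htv h.symm).symm
        · right; intro t
          by_cases htD : t ∈ D
          · have := hTw ⟨t, htD⟩
            constructor
            · rintro (h | h)
              · rcases this.mp (Or.inl (Subtype.ext h)) with h' | h'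
                · exact Or.inl (congrArg Subtype.val h')
                · exact Or.inr h'
              · rcases this.mp (Or.inr h) with h' | h'
                · exact Or.inl (congrArg Subtype.val h')
                · exact Or.inr h'
            · rintro (h | h)
              · rcases this.mpr (Or.inl (Subtype.ext h)) with h' | h'
                · exact Or.inl (congrArg Subtype.val h')
                · exact Or.inr h'
              · rcases this.mpr (Or.inr h) with h' | h'
                · exact Or.inl (congrArg Subtype.val h')
                · exact Or.inr h'
          · by_cases htv : t = v
            · subst htv
              exact iff_of_true (Or.inr hvp.symm) (Or.inr hvq.symm)
            · have htp : t ≠ p.1 := fun h => htD (h ▸ p.2)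
              have htq : t ≠ q.1 := fun h => htD (h ▸ q.2)
              constructor
              · rintro (h | h)
                · exact absurd h htp
                · exact Or.inr ((hnod p.1 p.2 q.1 q.2 t htD htv h.symm).symm)
              · rintro (h | h)
                · exact absurd h htq
                · exact Or.inr ((hnod q.1 q.2 p.1 p.2 t htD htv h.symm).symm)
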